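/- Let I ⊆ ℝ be a bounded interval or an interval contained in [0,∞), let s ≥ 0, k ≥ 2, m = s+2k, and let j ∈ {1,…,k}. Then there exists b ∈ ℬ such that the m−1 functions {f_i(·,b) : i ∈ {1,…,m}, i ≠ s+2j−1} (the rational system with the function 1/(t−b_j) removed) do NOT form a Chebyshev system on I; that is, there exist points t_1 < ⋯ < t_{m−1} and t'_1 < ⋯ < t'_{m−1} in I such that the corresponding (m−1)×(m−1) determinants of values are not both of the same strict sign (one is ≤ 0 while the other is ≥ 0, not both zero, or one vanishes). -/

import Mathlib

open Matrix Finset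

noncomputable def fRat (s k : ℕ) (b : Fin k → ℝ) (i : Fin (s + 2 * k)) (t : ℝ) : ℝ :=
  if hi : i.val < s then t ^ i.val
  else
    let q : Fin k := ⟨(i.val - s) / 2, by have := i.isLt; omega⟩
    if (i.val - s) % 2 = 0 then (t - b q)⁻¹ else ((t - b q) ^ 2)⁻¹

def IsChebyshevSystemIdx {ι : Type} [Fintype ι] [DecidableEq ι]
    (g : ι → ℝ → ℝ) (I : Set ℝ) : Prop :=
  ∃ ε : ℝ, (ε = 1 ∨ ε = -1) ∧
    ∀ x : Fin (Fintype.card ι) → ℝ, StrictMono x → (∀ j, x j ∈ I) →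
      0 < ε * (Matrix.of fun i j => g ((Fintype.equivFin ι).symm i) (x j)).det

open Polynomial


private lemma derivative_fin_prod {ι : Type*} [DecidableEq ι] (u : Finset ι) (f : ι → Polynomial ℝ) :
    Polynomial.derivative (∏ i ∈ u, f i)
      = ∑ i ∈ u, (∏ j ∈ u.erase i, f j) * Polynomial.derivative (f i) := by
  induction u using Finset.induction_on with
  | empty => simp
  | insert _ _ hni ih =>
    rename_i a t
    rw [Finset.prod_insert hni, derivative_mul, ih, Finset.sum_insert hni,
      Finset.erase_insert hni]
    congr 1
    · rw [mul_comm]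
    · rw [Finset.mul_sum]
      apply Finset.sum_congr rfl
      intro i hi
      rw [Finset.erase_insert_of_ne (by rintro rfl; exact hni hi),
        Finset.prod_insert (fun h => hni (Finset.mem_of_mem_erase h))]
      ring

private lemma sq_dvd_of_eval (p : Polynomial ℝ) (c : ℝ) (h0 : p.eval c = 0)
    (h1 : p.derivative.eval c = 0) : (X - C c) ^ 2 ∣ p := by
  obtain ⟨g, hg⟩ := (Polynomial.dvd_iff_isRoot).2 h0
  have hg' : g.eval c = 0 := by
    have := congrArg (fun q => Polynomial.eval c (Polynomial.derivative q)) hg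
    simp only [derivative_mul, derivative_sub, derivative_X, derivative_C, sub_zero, one_mul,
      eval_add, eval_mul, eval_sub, eval_X, eval_C, sub_self, zero_mul, add_zero, h1] at this
    linarith [this]
  obtain ⟨h, hh⟩ := (Polynomial.dvd_iff_isRoot).2 hg'
  exact ⟨h, by rw [hg, hh]; ring⟩

private lemma eval_of_sq_dvd (p : Polynomial ℝ) (c : ℝ) (h : (X - C c) ^ 2 ∣ p) :
    p.eval c = 0 ∧ p.derivative.eval c = 0 := by
  obtain ⟨g, hg⟩ := h
  subst hg
  constructor
  · simp
  · simp [derivative_mul, derivative_pow]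

private lemma sum_range_pair (k : ℕ) (H : ℕ → ℝ) :
    ∑ i ∈ Finset.range (2 * k), H i = ∑ q ∈ Finset.range k, (H (2 * q) + H (2 * q + 1)) := by
  induction k with
  | zero => simp
  | succ n ih =>
    have : 2 * (n + 1) = (2 * n) + 1 + 1 := by ring
    rw [this, Finset.sum_range_succ, Finset.sum_range_succ, ih, Finset.sum_range_succ]
    ring

private lemma deriv_prod_eval {ι : Type*} [DecidableEq ι] (u : Finset ι) (y : ι → ℝ) (e : ℕ)
    (he : 1 ≤ e) (t : ℝ) (h : ∀ i ∈ u, t ≠ y i) :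
    (Polynomial.derivative (∏ i ∈ u, (X - C (y i)) ^ e)).eval t
      = ((∏ i ∈ u, (X - C (y i)) ^ e).eval t) * ∑ i ∈ u, (e : ℝ) * (t - y i)⁻¹ := by
  rw [derivative_fin_prod, eval_finset_sum, Finset.mul_sum]
  apply Finset.sum_congr rfl
  intro i hi
  have hne : t - y i ≠ 0 := sub_ne_zero.2 (h i hi)
  rw [derivative_pow, eval_mul, eval_mul, eval_prod]
  simp only [eval_pow, eval_sub, eval_X, eval_C, eval_C_mul, eval_natCast, derivative_sub, derivative_X,
    derivative_C, sub_zero, eval_one, mul_one]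
  rw [eval_prod]
  simp only [eval_pow, eval_sub, eval_X, eval_C]
  rw [← Finset.mul_prod_erase u (fun i => (t - y i) ^ e) hi]
  have : (t - y i) ^ e = (t - y i) ^ (e - 1) * (t - y i) := by
    rw [← pow_succ]; congr 1; omega
  rw [this]
  field_simp

private noncomputable def Epoly {k : ℕ} (b : Fin k → ℝ) (i : Fin k) : Polynomial ℝ :=
  ∏ i' ∈ Finset.univ.erase i, (X - C (b i')) ^ 2

private noncomputable def Dpoly {k : ℕ} (b : Fin k → ℝ) : Polynomial ℝ :=
  ∏ i, (X - C (b i)) ^ 2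

private lemma Epoly_eval_ne {k : ℕ} (b : Fin k → ℝ) (hb : Function.Injective b) (i : Fin k) :
    (Epoly b i).eval (b i) ≠ 0 := by
  rw [Epoly, eval_prod]
  apply Finset.prod_ne_zero_iff.2
  intro i' hi'
  simp only [eval_pow, eval_sub, eval_X, eval_C]
  exact pow_ne_zero _ (sub_ne_zero.2 fun h => (Finset.mem_erase.1 hi').1 (hb h).symm)

private lemma Dpoly_eq {k : ℕ} (b : Fin k → ℝ) (i : Fin k) :
    Dpoly b = (X - C (b i)) ^ 2 * Epoly b i :=
  (Finset.mul_prod_erase Finset.univ _ (Finset.mem_univ i)).symm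

private lemma sq_dvd_Epoly {k : ℕ} (b : Fin k → ℝ) {i i' : Fin k} (h : i ≠ i') :
    (X - C (b i)) ^ 2 ∣ Epoly b i' :=
  Finset.dvd_prod_of_mem _ (Finset.mem_erase.2 ⟨h, Finset.mem_univ i⟩)

private lemma partial_frac (s k : ℕ) (hk : 1 ≤ k) (b : Fin k → ℝ) (hb : Function.Injective b)
    (q : Polynomial ℝ) (hq : q.natDegree ≤ s + 2 * k - 1) :
    ∃ (P : Polynomial ℝ) (A B : Fin k → ℝ),
      (∀ t, P.eval t = ∑ a ∈ Finset.range s, P.coeff a * t ^ a) ∧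
      (∀ i, B i = q.eval (b i) / (Epoly b i).eval (b i)) ∧
      (∀ i, A i * ((Epoly b i).eval (b i)) ^ 2
         = q.derivative.eval (b i) * (Epoly b i).eval (b i)
           - q.eval (b i) * (Epoly b i).derivative.eval (b i)) ∧
      (∀ t, (∀ i, t ≠ b i) →
        q.eval t = (P.eval t + ∑ i, (A i * (t - b i)⁻¹ + B i * ((t - b i) ^ 2)⁻¹))
          * (Dpoly b).eval t) := by
  set e : Fin k → ℝ := fun i => (Epoly b i).eval (b i) with he_def
  have he : ∀ i, e i ≠ 0 := Epoly_eval_ne b hb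
  set B : Fin k → ℝ := fun i => q.eval (b i) / e i with hB_def
  set A : Fin k → ℝ := fun i =>
    (q.derivative.eval (b i) - B i * (Epoly b i).derivative.eval (b i)) / e i with hA_def
  set r : Polynomial ℝ :=
    q - (∑ i, Polynomial.C (A i) * ((X - Polynomial.C (b i)) * Epoly b i))
      - ∑ i, Polynomial.C (B i) * Epoly b i with hr_def
  have hdvd : ∀ i, (X - C (b i)) ^ 2 ∣ r := by
    intro i
    have hz1 : ∀ i' ∈ Finset.univ, i' ≠ i →
        (Polynomial.C (A i') * ((X - Polynomial.C (b i')) * Epoly b i')).eval (b i) = 0 := by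
      intro i' _ h
      simp only [eval_mul, eval_C, eval_sub, eval_X]
      rw [(eval_of_sq_dvd _ _ (sq_dvd_Epoly b (Ne.symm h))).1]; ring
    have hz2 : ∀ i' ∈ Finset.univ, i' ≠ i →
        (Polynomial.C (B i') * Epoly b i').eval (b i) = 0 := by
      intro i' _ h
      simp only [eval_mul, eval_C]
      rw [(eval_of_sq_dvd _ _ (sq_dvd_Epoly b (Ne.symm h))).1]; ring
    have hz3 : ∀ i' ∈ Finset.univ, i' ≠ i →
        (Polynomial.derivative
          (Polynomial.C (A i') * ((X - Polynomial.C (b i')) * Epoly b i'))).eval (b i) = 0 := by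
      intro i' _ h
      rw [derivative_C_mul, eval_C_mul,
        (eval_of_sq_dvd _ _ ((sq_dvd_Epoly b (Ne.symm h)).mul_left _)).2]
      ring
    have hz4 : ∀ i' ∈ Finset.univ, i' ≠ i →
        (Polynomial.derivative (Polynomial.C (B i') * Epoly b i')).eval (b i) = 0 := by
      intro i' _ h
      rw [derivative_C_mul, eval_C_mul, (eval_of_sq_dvd _ _ (sq_dvd_Epoly b (Ne.symm h))).2]
      ring
    apply sq_dvd_of_eval
    · rw [hr_def]
      simp only [eval_sub, eval_finset_sum]
      rw [Finset.sum_eq_single_of_mem i (Finset.mem_univ i) hz1,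
        Finset.sum_eq_single_of_mem i (Finset.mem_univ i) hz2]
      simp only [eval_mul, eval_C, eval_sub, eval_X, sub_self, zero_mul, mul_zero, sub_zero]
      simp only [hB_def]
      rw [div_mul_cancel₀ _ (he i)]
      ring
    · rw [hr_def]
      simp only [derivative_sub, derivative_sum, eval_sub, eval_finset_sum]
      rw [Finset.sum_eq_single_of_mem i (Finset.mem_univ i) hz3,
        Finset.sum_eq_single_of_mem i (Finset.mem_univ i) hz4]
      rw [derivative_C_mul, eval_C_mul, derivative_mul, eval_add, eval_mul, eval_mul]
      rw [derivative_C_mul, eval_C_mul]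
      simp only [derivative_X_sub_C, eval_one, eval_sub, eval_X, eval_C, sub_self, zero_mul,
        one_mul, add_zero]
      simp only [hA_def]
      rw [div_mul_cancel₀ _ (he i)]
      ring
  have hDvd : Dpoly b ∣ r := by
    apply Finset.prod_dvd_of_coprime
    · intro i _ i' _ hne
      exact ((Polynomial.pairwise_coprime_X_sub_C hb hne).pow : _)
    · exact fun i _ => hdvd i
  obtain ⟨P, hP⟩ := hDvd
  have hD0 : Dpoly b ≠ 0 := by
    rw [Dpoly]
    exact Finset.prod_ne_zero_iff.2 fun i _ => pow_ne_zero _ (X_sub_C_ne_zero (b i))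
  have hE_deg : ∀ i : Fin k, (Epoly b i).natDegree ≤ 2 * k - 2 := by
    intro i
    refine (Polynomial.natDegree_prod_le _ _).trans ?_
    have : ∀ i' ∈ Finset.univ.erase i, ((X - Polynomial.C (b i')) ^ 2).natDegree ≤ 2 := by
      intro i' _
      simp [natDegree_pow]
    refine (Finset.sum_le_card_nsmul _ _ 2 this).trans ?_
    rw [Finset.card_erase_of_mem (Finset.mem_univ i), Finset.card_univ, Fintype.card_fin]
    simp [Nat.mul_sub]
    omega
  have hr_deg : r.natDegree ≤ s + 2 * k - 1 := by
    rw [hr_def]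
    refine (Polynomial.natDegree_sub_le _ _).trans (max_le ((Polynomial.natDegree_sub_le _ _).trans
      (max_le hq ?_)) ?_)
    · refine (Polynomial.natDegree_sum_le_of_forall_le _ _ ?_)
      intro i _
      refine (Polynomial.natDegree_C_mul_le _ _).trans ?_
      refine (Polynomial.natDegree_mul_le).trans ?_
      have := hE_deg i
      have h1 : (X - Polynomial.C (b i)).natDegree = 1 := Polynomial.natDegree_X_sub_C _
      omega
    · refine (Polynomial.natDegree_sum_le_of_forall_le _ _ ?_)
      intro i _
      refine (Polynomial.natDegree_C_mul_le _ _).trans ?_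
      have := hE_deg i
      omega
  have hD_deg : (Dpoly b).natDegree = 2 * k := by
    rw [Dpoly, Polynomial.natDegree_prod]
    · simp [natDegree_pow]
      ring
    · exact fun i _ => pow_ne_zero _ (X_sub_C_ne_zero (b i))
  have hP_eval : ∀ t, P.eval t = ∑ a ∈ Finset.range s, P.coeff a * t ^ a := by
    by_cases hP0 : P = 0
    · subst hP0; simp
    · intro t
      have hr0 : r ≠ 0 := by rw [hP]; exact mul_ne_zero hD0 hP0
      have : r.natDegree = 2 * k + P.natDegree := by
        rw [hP, Polynomial.natDegree_mul hD0 hP0, hD_deg]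
      have hPd : P.natDegree < s := by omega
      exact Polynomial.eval_eq_sum_range' hPd t
  refine ⟨P, A, B, hP_eval, fun i => rfl, ?_, ?_⟩
  · intro i
    have hA1 : A i * e i = q.derivative.eval (b i) - B i * (Epoly b i).derivative.eval (b i) := by
      simp only [hA_def]; exact div_mul_cancel₀ _ (he i)
    have hB1 : B i * e i = q.eval (b i) := by
      simp only [hB_def]; exact div_mul_cancel₀ _ (he i)
    calc A i * (e i) ^ 2 = (A i * e i) * e i := by ring
      _ = _ := by
        rw [hA1]
        linear_combination (-((Epoly b i).derivative.eval (b i))) * hB1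
  · intro t ht
    have hDt : (Dpoly b).eval t ≠ 0 := by
      rw [Dpoly, eval_prod]
      exact Finset.prod_ne_zero_iff.2 fun i _ => by
        simp only [eval_pow, eval_sub, eval_X, eval_C]
        exact pow_ne_zero _ (sub_ne_zero.2 (ht i))
    have hq_eq : q = Dpoly b * P + (∑ i, Polynomial.C (A i) * ((X - Polynomial.C (b i)) * Epoly b i))
        + ∑ i, Polynomial.C (B i) * Epoly b i := by
      rw [← hP, hr_def]; ring
    have hEt : ∀ i : Fin k, (Dpoly b).eval t = (t - b i) ^ 2 * (Epoly b i).eval t := by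
      intro i
      rw [Dpoly_eq b i, eval_mul]
      simp
    have hterm : ∀ i ∈ Finset.univ,
        (A i * (t - b i)⁻¹ + B i * ((t - b i) ^ 2)⁻¹) * (Dpoly b).eval t
          = A i * ((t - b i) * (Epoly b i).eval t) + B i * (Epoly b i).eval t := by
      intro i _
      rw [hEt i]
      have h0 : t - b i ≠ 0 := sub_ne_zero.2 (ht i)
      field_simp
    calc q.eval t = (Dpoly b).eval t * P.eval t
          + (∑ i, A i * ((t - b i) * (Epoly b i).eval t))
          + ∑ i, B i * (Epoly b i).eval t := by
            conv_lhs => rw [hq_eq]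
            simp only [eval_add, eval_mul, eval_finset_sum, eval_C, eval_sub, eval_X]
      _ = (P.eval t + ∑ i, (A i * (t - b i)⁻¹ + B i * ((t - b i) ^ 2)⁻¹)) * (Dpoly b).eval t := by
            rw [add_mul, Finset.sum_mul, Finset.sum_congr rfl hterm, Finset.sum_add_distrib]
            ring

private lemma fRat_eval_lt {s k : ℕ} (b : Fin k → ℝ) (i : Fin (s + 2 * k)) (hi : i.val < s)
    (t : ℝ) : fRat s k b i t = t ^ i.val := by
  rw [fRat, dif_pos hi]

private lemma fRat_eval_even {s k : ℕ} (b : Fin k → ℝ) (i : Fin (s + 2 * k)) (u : Fin k)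
    (hi : i.val = s + 2 * u.val) (t : ℝ) : fRat s k b i t = (t - b u)⁻¹ := by
  rw [fRat, dif_neg (by omega)]
  simp only
  rw [if_pos (by omega)]
  have h2 : (⟨(i.val - s) / 2, by have := i.isLt; omega⟩ : Fin k) = u := by
    apply Fin.ext; simp only; omega
  rw [h2]

private lemma fRat_eval_odd {s k : ℕ} (b : Fin k → ℝ) (i : Fin (s + 2 * k)) (u : Fin k)
    (hi : i.val = s + 2 * u.val + 1) (t : ℝ) : fRat s k b i t = ((t - b u) ^ 2)⁻¹ := by
  rw [fRat, dif_neg (by omega)]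
  simp only
  rw [if_neg (by omega)]
  have h2 : (⟨(i.val - s) / 2, by have := i.isLt; omega⟩ : Fin k) = u := by
    apply Fin.ext; simp only; omega
  rw [h2]

private lemma core (s k : ℕ) (hk : 2 ≤ k) (j : Fin k) (I : Set ℝ)
    (b : Fin k → ℝ) (hbI : ∀ i, b i ∉ I) (hbinj : Function.Injective b)
    (rIdx : Fin (s + 2 * k)) (hr : rIdx.val = s + 2 * j.val)
    (N : ℕ) (hN : N = s + 2 * k - 1)
    (x : Fin N → ℝ) (hx : StrictMono x) (hxI : ∀ l, x l ∈ I)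
    (hcond : ∑ l, (b j - x l)⁻¹ = ∑ i ∈ Finset.univ.erase j, 2 * (b j - b i)⁻¹) :
    ¬ IsChebyshevSystemIdx
        (fun p : {i : Fin (s + 2 * k) // i ≠ rIdx} => fRat s k b p.val) I := by
  rintro ⟨ε, hsgn, hch⟩
  have htb : ∀ (i : Fin k) (l : Fin N), x l ≠ b i := fun i l h => hbI i (h ▸ hxI l)
  set q : Polynomial ℝ := ∏ l : Fin N, (Polynomial.X - Polynomial.C (x l)) ^ 1 with hq_def
  have hq_deg : q.natDegree = N := by
    rw [hq_def, Polynomial.natDegree_prod]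
    · simp
    · intro l _
      simpa using Polynomial.X_sub_C_ne_zero (x l)
  have hqb : ∀ i : Fin k, q.eval (b i) ≠ 0 := by
    intro i
    rw [hq_def, Polynomial.eval_prod]
    exact Finset.prod_ne_zero_iff.2 fun l _ => by
      simp only [Polynomial.eval_pow, Polynomial.eval_sub, Polynomial.eval_X, Polynomial.eval_C,
        pow_one]
      exact sub_ne_zero.2 fun h => htb i l h.symm
  obtain ⟨P, A, B, hPev, hBdef, hAchar, hiden⟩ :=
    partial_frac s k (by omega) b hbinj q (by rw [hq_deg]; omega)
  have heE : (Epoly b j).eval (b j) ≠ 0 := Epoly_eval_ne b hbinj j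
  have hAj : A j = 0 := by
    have hS : q.derivative.eval (b j)
        = q.eval (b j) * ∑ l, ((1 : ℕ) : ℝ) * (b j - x l)⁻¹ := by
      rw [hq_def]
      exact deriv_prod_eval Finset.univ x 1 le_rfl (b j) (fun l _ => (htb j l).symm)
    have hT : (Epoly b j).derivative.eval (b j)
        = (Epoly b j).eval (b j) * ∑ i ∈ Finset.univ.erase j, ((2 : ℕ) : ℝ) * (b j - b i)⁻¹ := by
      rw [Epoly]
      exact deriv_prod_eval (Finset.univ.erase j) b 2 (by norm_num) (b j)
        (fun i hi => fun h => (Finset.mem_erase.1 hi).1 (hbinj h.symm))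
    have h0 : A j * ((Epoly b j).eval (b j)) ^ 2 = 0 := by
      rw [hAchar j, hS, hT]
      push_cast
      simp only [one_mul]
      rw [hcond]
      ring
    rcases mul_eq_zero.1 h0 with h | h
    · exact h
    · exact absurd h (pow_ne_zero _ heE)
  have hBj : B j ≠ 0 := by
    rw [hBdef j]
    exact div_ne_zero (hqb j) heE
  set V : Fin (s + 2 * k) → ℝ := fun i =>
    if hi : i.val < s then P.coeff i.val
    else if (i.val - s) % 2 = 0 then A ⟨(i.val - s) / 2, by have := i.isLt; omega⟩
      else B ⟨(i.val - s) / 2, by have := i.isLt; omega⟩ with hV_def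
  have hV_lt : ∀ (i : Fin (s + 2 * k)), i.val < s → V i = P.coeff i.val := by
    intro i hi
    rw [hV_def]
    simp only
    rw [dif_pos hi]
  have hV_even : ∀ (i : Fin (s + 2 * k)) (u : Fin k), i.val = s + 2 * u.val → V i = A u := by
    intro i u hi
    rw [hV_def]
    simp only
    rw [dif_neg (by omega), if_pos (by omega)]
    congr 1
    apply Fin.ext
    simp only
    omega
  have hV_odd : ∀ (i : Fin (s + 2 * k)) (u : Fin k), i.val = s + 2 * u.val + 1 → V i = B u := by
    intro i u hi
    rw [hV_def]
    simp only
    rw [dif_neg (by omega), if_neg (by omega)]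
    congr 1
    apply Fin.ext
    simp only
    omega
  have hVr : V rIdx = 0 := by rw [hV_even rIdx j hr, hAj]
  -- key vanishing identity
  have key : ∀ t : ℝ, (∀ i, t ≠ b i) → q.eval t = 0 →
      ∑ i : Fin (s + 2 * k), V i * fRat s k b i t = 0 := by
    intro t ht hq0
    have hDt : (Dpoly b).eval t ≠ 0 := by
      rw [Dpoly, Polynomial.eval_prod]
      exact Finset.prod_ne_zero_iff.2 fun i _ => by
        simp only [Polynomial.eval_pow, Polynomial.eval_sub, Polynomial.eval_X, Polynomial.eval_C]
        exact pow_ne_zero _ (sub_ne_zero.2 (ht i))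
    have hzero : P.eval t + ∑ i, (A i * (t - b i)⁻¹ + B i * ((t - b i) ^ 2)⁻¹) = 0 := by
      have := hiden t ht
      rw [hq0] at this
      rcases mul_eq_zero.1 this.symm with h | h
      · exact h
      · exact absurd h hDt
    set g : ℕ → ℝ := fun v =>
      if h : v < s + 2 * k then V ⟨v, h⟩ * fRat s k b ⟨v, h⟩ t else 0 with hg_def
    have hsum1 : ∑ i : Fin (s + 2 * k), V i * fRat s k b i t
        = ∑ v ∈ Finset.range (s + 2 * k), g v := by
      rw [← Fin.sum_univ_eq_sum_range]
      apply Finset.sum_congr rfl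
      intro i _
      rw [hg_def]
      simp only [dif_pos i.isLt, Fin.eta]
    have hpoly : ∑ v ∈ Finset.range s, g v = P.eval t := by
      rw [hPev t]
      apply Finset.sum_congr rfl
      intro v hv
      have hvs : v < s := Finset.mem_range.1 hv
      rw [hg_def]
      simp only
      rw [dif_pos (show v < s + 2 * k by omega),
        hV_lt ⟨v, by omega⟩ hvs, fRat_eval_lt b ⟨v, by omega⟩ hvs]
    have hrat : ∑ u ∈ Finset.range (2 * k), g (s + u)
        = ∑ i : Fin k, (A i * (t - b i)⁻¹ + B i * ((t - b i) ^ 2)⁻¹) := by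
      rw [sum_range_pair]
      have hstep : ∀ u ∈ Finset.range k, g (s + 2 * u) + g (s + (2 * u + 1))
          = (fun u => if h : u < k then
              A ⟨u, h⟩ * (t - b ⟨u, h⟩)⁻¹ + B ⟨u, h⟩ * ((t - b ⟨u, h⟩) ^ 2)⁻¹ else 0) u := by
        intro u hu
        have huk : u < k := Finset.mem_range.1 hu
        simp only
        rw [dif_pos huk, hg_def]
        simp only
        rw [dif_pos (show s + 2 * u < s + 2 * k by omega),
          dif_pos (show s + (2 * u + 1) < s + 2 * k by omega),
          hV_even ⟨s + 2 * u, by omega⟩ ⟨u, huk⟩ rfl,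
          hV_odd ⟨s + (2 * u + 1), by omega⟩ ⟨u, huk⟩ rfl,
          fRat_eval_even b ⟨s + 2 * u, by omega⟩ ⟨u, huk⟩ rfl,
          fRat_eval_odd b ⟨s + (2 * u + 1), by omega⟩ ⟨u, huk⟩ rfl]
      rw [Finset.sum_congr rfl hstep, ← Fin.sum_univ_eq_sum_range]
      apply Finset.sum_congr rfl
      intro u _
      rw [dif_pos u.isLt]
    rw [hsum1, Finset.sum_range_add, hpoly, hrat, hzero]
  -- set up the points for the determinant
  have hcard : Fintype.card {i : Fin (s + 2 * k) // i ≠ rIdx} = N := by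
    have h1 : Fintype.card {i : Fin (s + 2 * k) // i ≠ rIdx}
        = Fintype.card (Fin (s + 2 * k)) - Fintype.card {i : Fin (s + 2 * k) // i = rIdx} :=
      Fintype.card_subtype_compl _
    rw [h1, Fintype.card_subtype_eq, Fintype.card_fin]
    omega
  set x' : Fin (Fintype.card {i : Fin (s + 2 * k) // i ≠ rIdx}) → ℝ :=
    fun l => x (Fin.cast hcard l) with hx'_def
  have hx'mono : StrictMono x' := fun a c hac => hx ((Fin.castOrderIso hcard).strictMono hac)
  have hx'I : ∀ l, x' l ∈ I := fun l => hxI _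
  have spec := hch x' hx'mono hx'I
  -- the determinant is zero
  set e := Fintype.equivFin {i : Fin (s + 2 * k) // i ≠ rIdx} with he_def
  set M := Matrix.of fun i l => (fun p : {i : Fin (s + 2 * k) // i ≠ rIdx} =>
    fRat s k b p.val) (e.symm i) (x' l) with hM_def
  have hdet : M.det = 0 := by
    rw [← Matrix.exists_vecMul_eq_zero_iff]
    refine ⟨fun i => V (e.symm i).val, ?_, ?_⟩
    · intro h
      apply hBj
      have hlt : s + 2 * j.val + 1 < s + 2 * k := by have := j.isLt; omega
      have hne : (⟨s + 2 * j.val + 1, hlt⟩ : Fin (s + 2 * k)) ≠ rIdx := by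
        intro hcon
        have := congrArg Fin.val hcon
        simp only [hr] at this
        omega
      have := congrFun h (e ⟨⟨s + 2 * j.val + 1, hlt⟩, hne⟩)
      simp only [Equiv.symm_apply_apply, Pi.zero_apply] at this
      rw [hV_odd _ j rfl] at this
      exact this
    · funext l
      simp only [Matrix.vecMul, dotProduct, hM_def, Matrix.of_apply]
      have h1 : ∑ i, V (e.symm i).val * fRat s k b (e.symm i).val (x' l)
          = ∑ p : {i : Fin (s + 2 * k) // i ≠ rIdx}, V p.val * fRat s k b p.val (x' l) :=
        Equiv.sum_comp e.symm (fun p => V p.val * fRat s k b p.val (x' l))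
      rw [Pi.zero_apply]
      rw [h1, ← Finset.sum_subtype (Finset.univ.erase rIdx)
        (fun i => by simp [Finset.mem_erase]) (fun i => V i * fRat s k b i (x' l))]
      have h2 : V rIdx * fRat s k b rIdx (x' l)
          + ∑ i ∈ Finset.univ.erase rIdx, V i * fRat s k b i (x' l)
          = ∑ i : Fin (s + 2 * k), V i * fRat s k b i (x' l) :=
        Finset.add_sum_erase Finset.univ (fun i => V i * fRat s k b i (x' l)) (Finset.mem_univ rIdx)
      have h3 : q.eval (x' l) = 0 := by
        rw [hq_def, Polynomial.eval_prod]
        apply Finset.prod_eq_zero (Finset.mem_univ (Fin.cast hcard l))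
        simp [hx'_def]
      have h4 := key (x' l) (fun i h => htb i _ h) h3
      rw [hVr, zero_mul, zero_add] at h2
      rw [h2, h4]
  rw [hdet, mul_zero] at spec
  exact lt_irrefl 0 spec

/-- for `k ≥ 2` there exists `b ∈ ℬ` such that the rational system
with the function `1/(t−b_j)` removed is NOT a Chebyshev system on `I`. -/
theorem stmt12 (s k : ℕ) (hk : 2 ≤ k) (I : Set ℝ) (hI : I.OrdConnected)
    (hIb : Bornology.IsBounded I ∨ I ⊆ Set.Ici 0)
    (hne : ∃ a c : ℝ, a < c ∧ a ∈ I ∧ c ∈ I)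
    (j : Fin k) :
    ∃ b : Fin k → ℝ, (∀ i, b i ∉ I) ∧ Function.Injective b ∧
      ¬ IsChebyshevSystemIdx
        (fun p : {i : Fin (s + 2 * k) //
            i ≠ (⟨s + 2 * j.val, by have := j.isLt; omega⟩ : Fin (s + 2 * k))} =>
          fRat s k b p.val) I := by
  obtain ⟨a, c, hac, haI, hcI⟩ := hne
  obtain ⟨m, hm⟩ : ∃ m, ∀ y ∈ I, m ≤ y := by
    rcases hIb with hB | hB
    · obtain ⟨m, hm⟩ := hB.bddBelow
      exact ⟨m, fun y hy => hm hy⟩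
    · exact ⟨0, fun y hy => hB hy⟩
  have hma : m ≤ a := hm a haI
  set N : ℕ := s + 2 * k - 1 with hN_def
  have hN3 : 3 ≤ N := by omega
  have hNc : (3 : ℝ) ≤ (N : ℝ) := by exact_mod_cast hN3
  set d : ℝ := (c - a) / (N + 1) with hd_def
  have hd : 0 < d := div_pos (by linarith) (by positivity)
  have hNd : ((N : ℝ) + 1) * d = c - a := by
    rw [hd_def]
    field_simp
  set x : Fin N → ℝ := fun l => a + (l.val + 1) * d with hx_def
  have hxgt : ∀ l, a < x l := by
    intro l
    have h1 : (0 : ℝ) < (l.val + 1) * d := by positivity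
    simp only [hx_def]
    linarith
  have hxlt : ∀ l, x l < c := by
    intro l
    have h1 : (l.val + 1 : ℝ) < (N : ℝ) + 1 := by
      have := l.isLt
      have : (l.val : ℝ) < N := by exact_mod_cast l.isLt
      linarith
    have h2 := mul_lt_mul_of_pos_right h1 hd
    simp only [hx_def]
    linarith
  have hxmono : StrictMono x := by
    intro p q hpq
    have h1 : (p.val : ℝ) + 1 < (q.val : ℝ) + 1 := by
      have : (p.val : ℝ) < q.val := by exact_mod_cast hpq
      linarith
    have h2 := mul_lt_mul_of_pos_right h1 hd
    simp only [hx_def]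
    linarith
  have hxI : ∀ l, x l ∈ I := fun l => hI.out haI hcI ⟨(hxgt l).le, (hxlt l).le⟩
  -- the auxiliary index i₀ ≠ j
  set i₀ : Fin k := if j.val = 0 then ⟨1, by omega⟩ else ⟨0, by omega⟩ with hi0_def
  have hi0j : i₀ ≠ j := by
    rcases Nat.eq_zero_or_pos j.val with h | h
    · rw [hi0_def, if_pos h]
      intro hcon
      have := congrArg Fin.val hcon
      simp only at this
      omega
    · rw [hi0_def, if_neg (by omega)]
      intro hcon
      have := congrArg Fin.val hcon
      simp only at this
      omega
  -- the pole configuration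
  set G : ℝ := max (2 * c - 2 * m) 0 + 1 with hG_def
  have hGpos : 0 < G := by
    have := le_max_right (2 * c - 2 * m) (0 : ℝ)
    rw [hG_def]
    linarith
  have hG2 : 2 * c - 2 * m < G := by
    have := le_max_left (2 * c - 2 * m) (0 : ℝ)
    rw [hG_def]
    linarith
  have hGcm : 0 < G + c - m := by linarith
  set w : Fin k → ℝ := fun i => m - G - 1 - (i.val : ℝ) with hw_def
  set S : ℝ := ∑ l : Fin N, ((m - G) - x l)⁻¹ with hS_def
  set T : ℝ := ∑ i ∈ (Finset.univ.erase j).erase i₀, ((m - G) - w i)⁻¹ with hT_def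
  set bi0 : ℝ := (m - G) - 2 / (S - 2 * T) with hbi0_def
  set b : Fin k → ℝ := fun i => if i = j then m - G else if i = i₀ then bi0 else w i with hb_def
  -- bounds on S and T
  have hterm : ∀ l, ((m - G) - x l)⁻¹ ≤ -(G + c - m)⁻¹ := by
    intro l
    have h1 : (0 : ℝ) < -((m - G) - x l) := by have := hxgt l; linarith
    have h4 : -((m - G) - x l) ≤ G + c - m := by have := hxlt l; linarith
    have h5 := inv_anti₀ h1 h4
    rw [inv_neg] at h5
    linarith
  have hS_le : S ≤ (N : ℝ) * (-(G + c - m)⁻¹) := by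
    calc S ≤ ∑ _l : Fin N, -(G + c - m)⁻¹ := Finset.sum_le_sum fun l _ => hterm l
      _ = (N : ℝ) * (-(G + c - m)⁻¹) := by
          rw [Finset.sum_const, Finset.card_univ, Fintype.card_fin, nsmul_eq_mul]
  have hT0 : 0 ≤ T := by
    apply Finset.sum_nonneg
    intro i _
    have h1 : (m - G) - w i = 1 + (i.val : ℝ) := by rw [hw_def]; ring
    rw [h1]
    positivity
  have hinvpos : 0 < (G + c - m)⁻¹ := inv_pos.2 hGcm
  have hU : 3 * (G + c - m)⁻¹ ≤ 2 * T - S := by nlinarith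
  have hUpos : 0 < 2 * T - S := lt_of_lt_of_le (by positivity) hU
  have hSne : S - 2 * T ≠ 0 := by intro h; rw [show S - 2*T = -(2*T - S) by ring] at h; linarith [neg_eq_zero.1 h]
  have h2div : 2 / (S - 2 * T) = -(2 / (2 * T - S)) := by
    rw [show S - 2 * T = -(2 * T - S) by ring, div_neg]
  have h2divle : 2 / (2 * T - S) ≤ 2 * (G + c - m) / 3 := by
    rw [div_le_div_iff₀ hUpos (by norm_num)]
    have h4 : 3 ≤ (2 * T - S) * (G + c - m) := by
      have h5 := mul_le_mul_of_nonneg_right hU hGcm.le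
      rw [mul_assoc, inv_mul_cancel₀ hGcm.ne'] at h5
      linarith
    nlinarith
  have h2divpos : 0 < 2 / (2 * T - S) := by positivity
  have hbi0m : bi0 < m := by
    rw [hbi0_def, h2div]
    have : (m - G) + 2 / (2 * T - S) ≤ (m - G) + 2 * (G + c - m) / 3 := by linarith
    linarith
  have hbi0g : m - G < bi0 := by
    rw [hbi0_def, h2div]
    linarith
  -- values of b
  have hbj_val : b j = m - G := by rw [hb_def]; simp
  have hbi0_val : b i₀ = bi0 := by rw [hb_def]; simp [hi0j]
  have hbw : ∀ i, i ≠ j → i ≠ i₀ → b i = w i := by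
    intro i h1 h2
    rw [hb_def]
    simp [h1, h2]
  have hw_lt : ∀ i : Fin k, w i < m - G := by
    intro i
    rw [hw_def]
    have : (0:ℝ) ≤ (i.val : ℝ) := Nat.cast_nonneg _
    simp only
    linarith
  have hb_lt_m : ∀ i, b i < m := by
    intro i
    by_cases h1 : i = j
    · rw [h1, hbj_val]; linarith
    · by_cases h2 : i = i₀
      · rw [h2, hbi0_val]; exact hbi0m
      · rw [hbw i h1 h2]; have := hw_lt i; linarith
  have hbI : ∀ i, b i ∉ I := fun i hin => absurd (hm _ hin) (by have := hb_lt_m i; linarith)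
  -- injectivity
  have hbinj : Function.Injective b := by
    intro p q hpq
    by_cases hp1 : p = j <;> by_cases hq1 : q = j
    · rw [hp1, hq1]
    · exfalso
      rw [hp1, hbj_val] at hpq
      by_cases hq2 : q = i₀
      · rw [hq2, hbi0_val] at hpq; linarith
      · rw [hbw q hq1 hq2] at hpq; have := hw_lt q; linarith
    · exfalso
      rw [hq1, hbj_val] at hpq
      by_cases hp2 : p = i₀
      · rw [hp2, hbi0_val] at hpq; linarith
      · rw [hbw p hp1 hp2] at hpq; have := hw_lt p; linarith
    · by_cases hp2 : p = i₀ <;> by_cases hq2 : q = i₀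
      · rw [hp2, hq2]
      · exfalso
        rw [hp2, hbi0_val, hbw q hq1 hq2] at hpq
        have := hw_lt q; linarith
      · exfalso
        rw [hq2, hbi0_val, hbw p hp1 hp2] at hpq
        have := hw_lt p; linarith
      · rw [hbw p hp1 hp2, hbw q hq1 hq2, hw_def] at hpq
        simp only at hpq
        have : (p.val : ℝ) = q.val := by linarith
        exact Fin.ext (by exact_mod_cast this)
  -- the balance condition
  have hcond : ∑ l, (b j - x l)⁻¹ = ∑ i ∈ Finset.univ.erase j, 2 * (b j - b i)⁻¹ := by
    have hL : ∑ l, (b j - x l)⁻¹ = S := by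
      rw [hS_def]
      exact Finset.sum_congr rfl fun l _ => by rw [hbj_val]
    have hmem : i₀ ∈ Finset.univ.erase j := Finset.mem_erase.2 ⟨hi0j, Finset.mem_univ i₀⟩
    have hR : ∑ i ∈ Finset.univ.erase j, 2 * (b j - b i)⁻¹
        = 2 * (b j - b i₀)⁻¹ + ∑ i ∈ (Finset.univ.erase j).erase i₀, 2 * (b j - b i)⁻¹ :=
      (Finset.add_sum_erase _ (fun i => 2 * (b j - b i)⁻¹) hmem).symm
    have hR2 : ∑ i ∈ (Finset.univ.erase j).erase i₀, 2 * (b j - b i)⁻¹ = 2 * T := by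
      rw [hT_def, Finset.mul_sum]
      apply Finset.sum_congr rfl
      intro i hi
      have h1 : i ≠ i₀ := (Finset.mem_erase.1 hi).1
      have h2 : i ≠ j := (Finset.mem_erase.1 (Finset.mem_of_mem_erase hi)).1
      rw [hbj_val, hbw i h2 h1]
    have hR1 : 2 * (b j - b i₀)⁻¹ = S - 2 * T := by
      rw [hbj_val, hbi0_val, hbi0_def]
      rw [show m - G - (m - G - 2 / (S - 2 * T)) = 2 / (S - 2 * T) by ring]
      rw [div_eq_mul_inv, mul_inv, inv_inv]
      rw [← mul_assoc]
      norm_num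
    rw [hL, hR, hR1, hR2]
    ring
  exact ⟨b, hbI, hbinj,
    core s k hk j I b hbI hbinj ⟨s + 2 * j.val, by have := j.isLt; omega⟩ rfl N hN_def
      x hxmono hxI hcond⟩
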